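/- Let k ≥ 1, t = ⌊log_2 k⌋ + 1, and n ≥ 2k + 1 + 2^t. Then w(k,n) - w(k, n - 2^t) = s(k, k+1+2^t, 2^t), where the right-hand side is independent of n. -/

import Mathlib

/-- Derivative of a binary sequence (indexed by ℕ, zero-padded beyond its length). -/
def d (x : ℕ → ZMod 2) : ℕ → ZMod 2 := fun i => x i + x (i + 1)

/-- The k-th canonical basis vector (as a zero-padded ℕ-indexed sequence). -/
def e (k : ℕ) : ℕ → ZMod 2 := fun i => if i = k then 1 else 0

/-- Zero-padding of a vector of F_2^n to an ℕ-indexed sequence. -/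
def pad (n : ℕ) (x : Fin n → ZMod 2) : ℕ → ZMod 2 :=
  fun i => if h : i < n then x ⟨i, h⟩ else 0

/-- Number of ones among the first `len` entries of a sequence. -/
def rowW (x : ℕ → ZMod 2) (len : ℕ) : ℕ :=
  ((Finset.range len).filter (fun c => x c = 1)).card

/-- Weight of the Steinhaus triangle of size n generated by x. -/
def triW (x : ℕ → ZMod 2) (n : ℕ) : ℕ :=
  ∑ r ∈ Finset.range n, rowW (d^[r] x) (n - r)

/-- w k n : weight of the Steinhaus triangle generated by e_k^{(n)}. -/
def w (k n : ℕ) : ℕ := triW (e k) n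

/-- s k n m : total weight of rows 0,…,m-1 of the triangle T(e_k^{(n)}). -/
def s (k n m : ℕ) : ℕ :=
  ∑ r ∈ Finset.range m, rowW (d^[r] (e k)) (n - r)

lemma row_formula (k : ℕ) : ∀ r i, d^[r] (e k) i =
    if i ≤ k then ((r.choose (k - i) : ℕ) : ZMod 2) else 0 := by
  intro r
  induction r with
  | zero =>
    intro i
    simp only [Function.iterate_zero, id_eq, e]
    rcases lt_trichotomy i k with h | h | h
    · rw [if_neg (by omega), if_pos (by omega), Nat.choose_eq_zero_of_lt (by omega)]
      simp
    · subst h; simp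
    · rw [if_neg (by omega), if_neg (by omega)]
  | succ r ih =>
    intro i
    rw [Function.iterate_succ_apply', d]
    simp only [ih]
    rcases lt_trichotomy i k with h | h | h
    · rw [if_pos (by omega), if_pos (by omega), if_pos (by omega)]
      have hki : k - i = (k - (i + 1)) + 1 := by omega
      rw [hki, Nat.choose_succ_succ]
      push_cast
      ring
    · subst h
      rw [if_pos le_rfl, if_pos le_rfl, if_neg (by omega)]
      simp
    · rw [if_neg (by omega), if_neg (by omega), if_neg (by omega)]
      simp

lemma choose_period : ∀ t r j, j < 2 ^ t → (r + 2 ^ t).choose j ≡ r.choose j [MOD 2] := by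
  intro t
  induction t with
  | zero =>
    intro r j hj
    interval_cases j
    simp [Nat.ModEq.refl]
  | succ t ih =>
    intro r j hj
    have h1 : (r + 2 ^ (t + 1)).choose j ≡
        ((r + 2 ^ (t + 1)) % 2).choose (j % 2) * ((r + 2 ^ (t + 1)) / 2).choose (j / 2) [MOD 2] :=
      Choose.choose_modEq_choose_mod_mul_choose_div_nat
    have h2 : r.choose j ≡ (r % 2).choose (j % 2) * (r / 2).choose (j / 2) [MOD 2] :=
      Choose.choose_modEq_choose_mod_mul_choose_div_nat
    have hm : (r + 2 ^ (t + 1)) % 2 = r % 2 := by omega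
    have hd : (r + 2 ^ (t + 1)) / 2 = r / 2 + 2 ^ t := by omega
    have h3 : (r / 2 + 2 ^ t).choose (j / 2) ≡ (r / 2).choose (j / 2) [MOD 2] :=
      ih (r / 2) (j / 2) (by omega)
    calc (r + 2 ^ (t + 1)).choose j
        ≡ (r % 2).choose (j % 2) * (r / 2 + 2 ^ t).choose (j / 2) [MOD 2] := by
          rw [hm, hd] at h1; exact h1
      _ ≡ (r % 2).choose (j % 2) * (r / 2).choose (j / 2) [MOD 2] :=
          Nat.ModEq.mul_left _ h3
      _ ≡ r.choose j [MOD 2] := h2.symm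

lemma rowW_full (k r L : ℕ) (hL : k < L) :
    rowW (d^[r] (e k)) L = rowW (d^[r] (e k)) (k + 1) := by
  unfold rowW
  congr 1
  ext i
  simp only [Finset.mem_filter, Finset.mem_range]
  constructor
  · rintro ⟨hi, h1⟩
    refine ⟨?_, h1⟩
    by_contra hik
    rw [row_formula, if_neg (by omega)] at h1
    exact one_ne_zero h1.symm
  · rintro ⟨hi, h1⟩
    exact ⟨by omega, h1⟩

lemma iterate_period (k t : ℕ) (hk : k < 2 ^ t) (r : ℕ) :
    d^[r + 2 ^ t] (e k) = d^[r] (e k) := by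
  funext i
  rw [row_formula, row_formula]
  split
  · next h =>
    have := choose_period t r (k - i) (by omega)
    exact (ZMod.natCast_eq_natCast_iff _ _ _).mpr this
  · rfl

/-- w(k,n) - w(k,n-2^t) = s(k, k+1+2^t, 2^t), independent of n. -/
theorem stmt9 (k : ℕ) (hk : 1 ≤ k) (t : ℕ) (ht : t = Nat.log 2 k + 1)
    (n : ℕ) (hn : 2 * k + 1 + 2 ^ t ≤ n) :
    w k n - w k (n - 2 ^ t) = s k (k + 1 + 2 ^ t) (2 ^ t) ∧
    w k (n - 2 ^ t) ≤ w k n := by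
  have hk2 : k < 2 ^ t := by
    rw [ht]; exact Nat.lt_pow_succ_log_self (by norm_num) k
  set p := 2 ^ t with hp
  have hp1 : 1 ≤ p := Nat.one_le_two_pow
  set F : ℕ → ℕ := fun r => rowW (d^[r] (e k)) (k + 1) with hF
  -- F is periodic with period p
  have Fper : ∀ r, F (r + p) = F r := by
    intro r
    simp only [hF, iterate_period k t hk2 r]
    exact congrArg (fun f => rowW f (k + 1)) (iterate_period k t hk2 r)
  -- sums of F over a window of length p are shift-invariant
  have shift : ∀ v, ∑ r ∈ Finset.range p, F (v + r) = ∑ r ∈ Finset.range p, F r := by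
    intro v
    induction v with
    | zero => simp
    | succ v ih =>
      have h1 : ∑ r ∈ Finset.range (p + 1), F (v + r)
          = (∑ r ∈ Finset.range p, F (v + r)) + F (v + p) := Finset.sum_range_succ _ _
      have h2 : ∑ r ∈ Finset.range (p + 1), F (v + r)
          = (∑ r ∈ Finset.range p, F (v + (r + 1))) + F (v + 0) := Finset.sum_range_succ' _ _
      have h3 : ∑ r ∈ Finset.range p, F (v + (r + 1)) = ∑ r ∈ Finset.range p, F (v + 1 + r) :=
        Finset.sum_congr rfl (fun r _ => by rw [show v + (r + 1) = v + 1 + r by omega])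
      have h4 : F (v + p) = F v := Fper v
      have h5 : F (v + 0) = F v := by rw [Nat.add_zero]
      omega
  -- decomposition of w for m ≥ k
  have decomp : ∀ m, k ≤ m → w k m = (∑ r ∈ Finset.range (m - k), F r) +
      ∑ j ∈ Finset.range k, rowW (d^[m - k + j] (e k)) (k - j) := by
    intro m hm
    have e1 : Finset.range m = Finset.range ((m - k) + k) := by rw [Nat.sub_add_cancel hm]
    rw [w, triW, e1, Finset.sum_range_add]
    congr 1
    · apply Finset.sum_congr rfl
      intro r hr
      simp only [Finset.mem_range] at hr
      simp only [hF]
      exact rowW_full k r (m - r) (by omega)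
    · apply Finset.sum_congr rfl
      intro j hj
      simp only [Finset.mem_range] at hj
      congr 1
      omega
  set n' := n - p with hn'
  have hd1 := decomp n (by omega)
  have hd2 := decomp n' (by omega)
  have hBsum : ∑ j ∈ Finset.range k, rowW (d^[n - k + j] (e k)) (k - j)
      = ∑ j ∈ Finset.range k, rowW (d^[n' - k + j] (e k)) (k - j) := by
    apply Finset.sum_congr rfl
    intro j hj
    simp only [Finset.mem_range] at hj
    have h1 : n - k + j = (n' - k + j) + p := by omega
    rw [h1, iterate_period k t hk2]
  have hA : ∑ r ∈ Finset.range (n - k), F r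
      = (∑ r ∈ Finset.range (n' - k), F r) + ∑ r ∈ Finset.range p, F r := by
    have h1 : n - k = (n' - k) + p := by omega
    rw [h1, Finset.sum_range_add]
    congr 1
    exact shift (n' - k)
  have hS : s k (k + 1 + p) p = ∑ r ∈ Finset.range p, F r := by
    rw [s]
    apply Finset.sum_congr rfl
    intro r hr
    simp only [Finset.mem_range] at hr
    simp only [hF]
    have h2 : k + 1 + p - r = k + 1 + (p - r) := by omega
    exact rowW_full k r _ (by omega)
  constructor <;> omega
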